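/- If there exists a unit vector |Q⟩ in C^K ⊗ (C^d)^{⊗n} whose reduced state on system 0 and any m of the systems 1,…,n is maximally mixed (equal to 1/(K d^m)), then K d^m ≤ √(K d^n); equivalently, K ≤ d^{n-2m} (quantum Singleton bound for pure codes). -/

import Mathlib

open Matrix

/-- Merge an assignment on the subsystems in `I` with one on the complement. -/
def mergeFn {n d : ℕ} (I : Finset (Fin n)) (f : {i // i ∈ I} → Fin d)
    (h : {i // i ∉ I} → Fin d) : Fin n → Fin d :=
  fun i => if hi : i ∈ I then f ⟨i, hi⟩ else h ⟨i, hi⟩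

/-- Reduced density matrix of the pure state `Q` on `C^K ⊗ (C^d)^{⊗n}`, keeping
system `0` (the `C^K` factor) and the subsystems in `I`. -/
noncomputable def red0 {K n d : ℕ} (I : Finset (Fin n))
    (Q : Fin K × (Fin n → Fin d) → ℂ) :
    Matrix (Fin K × ({i // i ∈ I} → Fin d)) (Fin K × ({i // i ∈ I} → Fin d)) ℂ :=
  fun p q => ∑ h : {i // i ∉ I} → Fin d,
    Q (p.1, mergeFn I p.2 h) * star (Q (q.1, mergeFn I q.2 h))

theorem key {K n d m : ℕ} (hm : m ≤ n)
    (Q : Fin K × (Fin n → Fin d) → ℂ)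
    (hQ : ∑ x, star (Q x) * Q x = 1)
    (hmarg : ∀ I : Finset (Fin n), I.card = m →
      red0 I Q = (((K : ℂ) * (d : ℂ) ^ m))⁻¹ • (1 : Matrix _ _ ℂ)) :
    K * d ^ m ≤ d ^ (n - m) := by
  -- the full index type is nonempty
  have hne : Nonempty (Fin K × (Fin n → Fin d)) := by
    by_contra h
    rw [not_nonempty_iff] at h
    rw [Finset.univ_eq_empty, Finset.sum_empty] at hQ
    exact one_ne_zero hQ.symm
  have hK : 0 < K := Fin.pos_iff_nonempty.mpr ⟨hne.some.1⟩
  have hdm : (0:ℕ) < d ^ m := by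
    rcases Nat.eq_zero_or_pos m with hm0 | hm0
    · simp [hm0]
    · have : 0 < d := by
        by_contra hd
        have hd0 : d = 0 := by omega
        have hn0 : 0 < n := lt_of_lt_of_le hm0 hm
        have f := hne.some.2 ⟨0, hn0⟩
        subst hd0
        exact absurd f.2 (by omega)
      positivity
  -- pick a subset of size m
  obtain ⟨I, -, hI⟩ := Finset.exists_subset_card_eq (by simpa using hm :
      m ≤ (Finset.univ : Finset (Fin n)).card)
  -- red0 I Q = A * Aᴴ
  set A : Matrix (Fin K × ({i // i ∈ I} → Fin d)) ({i // i ∉ I} → Fin d) ℂ :=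
    fun p h => Q (p.1, mergeFn I p.2 h) with hA
  have hfac : red0 I Q = A * Aᴴ := by
    funext p q
    rw [Matrix.mul_apply]
    simp only [Matrix.conjTranspose_apply]
    simp [red0, Matrix.mul_apply, Matrix.conjTranspose_apply, hA]
  have hc : ((K : ℂ) * (d : ℂ) ^ m) ≠ 0 := by
    have h0 : ((K * d ^ m : ℕ) : ℂ) ≠ 0 :=
      Nat.cast_ne_zero.mpr (Nat.mul_ne_zero hK.ne' hdm.ne')
    push_cast at h0
    exact h0
  have hunit : IsUnit (red0 I Q) := by
    rw [hmarg I hI, Matrix.isUnit_iff_isUnit_det, Matrix.det_smul, Matrix.det_one, mul_one]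
    exact (IsUnit.pow _ (Ne.isUnit (inv_ne_zero hc)))
  have hrank : (red0 I Q).rank = Fintype.card (Fin K × ({i // i ∈ I} → Fin d)) :=
    Matrix.rank_of_isUnit _ hunit
  have hle : (red0 I Q).rank ≤ Fintype.card ({i // i ∉ I} → Fin d) := by
    rw [hfac]
    exact le_trans (Matrix.rank_mul_le_left A Aᴴ) (Matrix.rank_le_card_width A)
  rw [hrank] at hle
  have h1 : Fintype.card (Fin K × ({i // i ∈ I} → Fin d)) = K * d ^ m := by
    simp [Fintype.card_fun, hI, Fintype.card_coe]
  have h2 : Fintype.card ({i // i ∉ I} → Fin d) = d ^ (n - m) := by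
    have : Fintype.card {i // i ∉ I} = n - m := by
      rw [Fintype.card_subtype_compl]
      simp [Fintype.card_coe, hI]
    simp [Fintype.card_fun, this]
  rw [h1, h2] at hle
  exact hle

/-- Quantum Singleton bound for pure codes. -/
theorem stmt8 {K n d m : ℕ} (hm : m ≤ n)
    (Q : Fin K × (Fin n → Fin d) → ℂ)
    (hQ : ∑ x, star (Q x) * Q x = 1)
    (hmarg : ∀ I : Finset (Fin n), I.card = m →
      red0 I Q = (((K : ℂ) * (d : ℂ) ^ m))⁻¹ • (1 : Matrix _ _ ℂ)) :
    (K : ℝ) * (d : ℝ) ^ m ≤ Real.sqrt ((K : ℝ) * (d : ℝ) ^ n) ∧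
      (K : ℝ) ≤ (d : ℝ) ^ ((n : ℤ) - 2 * (m : ℤ)) := by
  have hkey := key hm Q hQ hmarg
  have hkeyR : (K : ℝ) * (d : ℝ) ^ m ≤ (d : ℝ) ^ (n - m) := by exact_mod_cast hkey
  have hne : Nonempty (Fin K × (Fin n → Fin d)) := by
    by_contra h
    rw [not_nonempty_iff] at h
    rw [Finset.univ_eq_empty, Finset.sum_empty] at hQ
    exact one_ne_zero hQ.symm
  have hK : 0 < K := Fin.pos_iff_nonempty.mpr ⟨hne.some.1⟩
  constructor
  · rw [show ((K:ℝ) * d ^ m) = Real.sqrt (((K:ℝ) * d ^ m)^2) by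
      rw [Real.sqrt_sq (by positivity)]]
    apply Real.sqrt_le_sqrt
    have : ((K:ℝ) * d ^ m)^2 = (K:ℝ) * ((K:ℝ) * d^m * d^m) := by ring
    rw [this]
    have h2 : (K:ℝ) * (d:ℝ)^m * (d:ℝ)^m ≤ (d:ℝ)^(n-m) * (d:ℝ)^m := by
      apply mul_le_mul_of_nonneg_right hkeyR (by positivity)
    calc (K:ℝ) * ((K:ℝ) * d^m * d^m) ≤ (K:ℝ) * ((d:ℝ)^(n-m) * (d:ℝ)^m) := by
          apply mul_le_mul_of_nonneg_left h2 (by positivity)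
      _ = (K:ℝ) * (d:ℝ)^n := by rw [← pow_add]; congr 2; omega
  · rcases Nat.eq_zero_or_pos d with hd | hd
    ·
      subst hd
      rcases Nat.eq_zero_or_pos n with hn | hn
      · subst hn
        have hm0 : m = 0 := le_antisymm hm (Nat.zero_le m)
        subst hm0
        simp only [Nat.sub_zero, pow_zero, mul_one] at hkey
        simp only [Nat.cast_zero, Nat.cast_ofNat]
        norm_num
        exact_mod_cast hkey
      · exfalso
        have f := hne.some.2 ⟨0, hn⟩
        exact absurd f.2 (by omega)
    · have hdR : (0:ℝ) < d := by exact_mod_cast hd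
      have : (d:ℝ) ^ ((n : ℤ) - 2 * (m : ℤ)) = (d:ℝ)^(n-m) / (d:ℝ)^m := by
        rw [div_eq_mul_inv, ← zpow_natCast (d:ℝ) (n-m), ← zpow_natCast (d:ℝ) m,
          ← _root_.zpow_neg, ← zpow_add₀ (ne_of_gt hdR)]
        congr 1
        omega
      rw [this, le_div_iff₀ (by positivity)]
      exact hkeyR
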